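/- For the explicit counterexample operator H (built from |ψ_AB⟩ = (6|01⟩−9|10⟩−10|11⟩)/√217, |ψ_AC⟩ = (−2|00⟩−4|01⟩−|10⟩+5|11⟩)/√46, |ψ_BC⟩ = (−6|00⟩−|01⟩−4|10⟩)/√53, weights 1/6 each plus identities) the von Neumann entropy satisfies S(H) > S(H_target), where S(H_target) = (1/2)log₂2 + 3·(1/6)log₂6 ≈ 1.7925 bits; i.e. the counterexample to majorization does not violate the entropy-minimization (original spin alignment) statement. -/

import Mathlib

open Matrix Finset ComplexOrder

noncomputable section

abbrev Q3 : Type := Fin 2 × Fin 2 × Fin 2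

/-- Ky Fan `r`-sum: the largest possible sum of `r` eigenvalues of a Hermitian matrix. -/
noncomputable def kyFan {n : Type*} [Fintype n] [DecidableEq n]
    {A : Matrix n n ℂ} (hA : A.IsHermitian) (r : ℕ) : ℝ :=
  sSup {x : ℝ | ∃ s : Finset n, s.card = r ∧ x = ∑ i ∈ s, hA.eigenvalues i}

/-- Eigenvalue majorization of Hermitian matrices. -/
def Majorized {n : Type*} [Fintype n] [DecidableEq n]
    {A B : Matrix n n ℂ} (hA : A.IsHermitian) (hB : B.IsHermitian) : Prop :=
  (∀ r : ℕ, kyFan hA r ≤ kyFan hB r) ∧ A.trace = B.trace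

/-- Eigenvalues of a Hermitian matrix sorted in nonincreasing order. -/
noncomputable def sortedEigDesc {n : ℕ} {A : Matrix (Fin n) (Fin n) ℂ}
    (hA : A.IsHermitian) : Fin n → ℝ :=
  fun i => (hA.eigenvalues ∘ Tuple.sort hA.eigenvalues) i.rev

def IsDensity {n : Type*} [Fintype n] [DecidableEq n] (ρ : Matrix n n ℂ) : Prop :=
  ρ.PosSemidef ∧ ρ.trace = 1

def P0 : Matrix (Fin 2) (Fin 2) ℂ := fun i j => if i = 0 ∧ j = 0 then 1 else 0

def P00 : Matrix (Fin 2 × Fin 2) (Fin 2 × Fin 2) ℂ :=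
  fun p q => P0 p.1 q.1 * P0 p.2 q.2

/-- Projector onto a pure two-qubit state. -/
def proj2 (v : Fin 2 × Fin 2 → ℂ) : Matrix (Fin 2 × Fin 2) (Fin 2 × Fin 2) ℂ :=
  fun p q => v p * (starRingEnd ℂ) (v q)

/-- Projector onto a pure three-qubit state. -/
def projQ3 (v : Q3 → ℂ) : Matrix Q3 Q3 ℂ :=
  fun p q => v p * (starRingEnd ℂ) (v q)

/-- Embed a two-body operator on qubits A,B, acting as identity on C. -/
def embAB (M : Matrix (Fin 2 × Fin 2) (Fin 2 × Fin 2) ℂ) : Matrix Q3 Q3 ℂ :=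
  fun p q => M (p.1, p.2.1) (q.1, q.2.1) * (if p.2.2 = q.2.2 then 1 else 0)

/-- Embed a two-body operator on qubits A,C, acting as identity on B. -/
def embAC (M : Matrix (Fin 2 × Fin 2) (Fin 2 × Fin 2) ℂ) : Matrix Q3 Q3 ℂ :=
  fun p q => M (p.1, p.2.2) (q.1, q.2.2) * (if p.2.1 = q.2.1 then 1 else 0)

/-- Embed a two-body operator on qubits B,C, acting as identity on A. -/
def embBC (M : Matrix (Fin 2 × Fin 2) (Fin 2 × Fin 2) ℂ) : Matrix Q3 Q3 ℂ :=
  fun p q => M p.2 q.2 * (if p.1 = q.1 then 1 else 0)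

def embA (M : Matrix (Fin 2) (Fin 2) ℂ) : Matrix Q3 Q3 ℂ :=
  fun p q => M p.1 q.1 * (if p.2 = q.2 then 1 else 0)

def embB (M : Matrix (Fin 2) (Fin 2) ℂ) : Matrix Q3 Q3 ℂ :=
  fun p q => M p.2.1 q.2.1 * (if (p.1, p.2.2) = (q.1, q.2.2) then 1 else 0)

def embC (M : Matrix (Fin 2) (Fin 2) ℂ) : Matrix Q3 Q3 ℂ :=
  fun p q => M p.2.2 q.2.2 * (if (p.1, p.2.1) = (q.1, q.2.1) then 1 else 0)

def margA (ρ : Matrix Q3 Q3 ℂ) : Matrix (Fin 2) (Fin 2) ℂ :=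
  fun i j => ∑ b : Fin 2, ∑ c : Fin 2, ρ (i, b, c) (j, b, c)

def margB (ρ : Matrix Q3 Q3 ℂ) : Matrix (Fin 2) (Fin 2) ℂ :=
  fun i j => ∑ a : Fin 2, ∑ c : Fin 2, ρ (a, i, c) (a, j, c)

def margC (ρ : Matrix Q3 Q3 ℂ) : Matrix (Fin 2) (Fin 2) ℂ :=
  fun i j => ∑ a : Fin 2, ∑ b : Fin 2, ρ (a, b, i) (a, b, j)

def margAB (ρ : Matrix Q3 Q3 ℂ) : Matrix (Fin 2 × Fin 2) (Fin 2 × Fin 2) ℂ :=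
  fun p q => ∑ c : Fin 2, ρ (p.1, p.2, c) (q.1, q.2, c)

def margAC (ρ : Matrix Q3 Q3 ℂ) : Matrix (Fin 2 × Fin 2) (Fin 2 × Fin 2) ℂ :=
  fun p q => ∑ b : Fin 2, ρ (p.1, b, p.2) (q.1, b, q.2)

def margBC (ρ : Matrix Q3 Q3 ℂ) : Matrix (Fin 2 × Fin 2) (Fin 2 × Fin 2) ℂ :=
  fun p q => ∑ a : Fin 2, ρ (a, p.1, p.2) (a, q.1, q.2)

def sigmaY : Matrix (Fin 2) (Fin 2) ℂ := !![0, -Complex.I; Complex.I, 0]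

/-- The alignment target `H_target = (1/6)(P₀⊗P₀⊗I + P₀⊗I⊗P₀ + I⊗P₀⊗P₀)`. -/
def Htarget : Matrix Q3 Q3 ℂ := (1/6 : ℂ) • (embAB P00 + embAC P00 + embBC P00)

/-- The alignment operator built from three two-body pure states. -/
def Hof (u v w : Fin 2 × Fin 2 → ℂ) : Matrix Q3 Q3 ℂ :=
  (1/6 : ℂ) • (embAB (proj2 u) + embAC (proj2 v) + embBC (proj2 w))

end


noncomputable def psiAB : Fin 2 × Fin 2 → ℂ :=
  fun p => (((![![(0:ℝ), 6], ![-9, -10]] p.1 p.2) / Real.sqrt 217 : ℝ) : ℂ)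

noncomputable def psiAC : Fin 2 × Fin 2 → ℂ :=
  fun p => (((![![(-2:ℝ), -4], ![-1, 5]] p.1 p.2) / Real.sqrt 46 : ℝ) : ℂ)

noncomputable def psiBC : Fin 2 × Fin 2 → ℂ :=
  fun p => (((![![(-6:ℝ), -1], ![-4, 0]] p.1 p.2) / Real.sqrt 53 : ℝ) : ℂ)

/-- Von Neumann entropy in bits, `S(A) = -∑ λᵢ log₂ λᵢ`. -/
noncomputable def vNEntropy {n : Type*} [Fintype n] [DecidableEq n]
    {A : Matrix n n ℂ} (hA : A.IsHermitian) : ℝ :=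
  ∑ i, -(hA.eigenvalues i * Real.logb 2 (hA.eigenvalues i))

-- rationalized projectors
lemma proj2_psiAB : proj2 psiAB = fun p q =>
    (((![![(0:ℝ), 6], ![-9, -10]] p.1 p.2) * (![![(0:ℝ), 6], ![-9, -10]] q.1 q.2) / 217 : ℝ) : ℂ) := by
  funext p q
  simp only [proj2, psiAB, Complex.conj_ofReal, ← Complex.ofReal_mul]
  congr 1
  rw [div_mul_div_comm, Real.mul_self_sqrt (by norm_num)]

-- diagonal form of Htarget
noncomputable def dT : Q3 → ℂ := fun p =>
  (1/6 : ℂ) * ((if p.1 = 0 ∧ p.2.1 = 0 then 1 else 0) + (if p.1 = 0 ∧ p.2.2 = 0 then 1 else 0)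
    + (if p.2.1 = 0 ∧ p.2.2 = 0 then 1 else 0))

lemma Htarget_eq : Htarget = Matrix.diagonal dT := by
  ext ⟨a, b, c⟩ ⟨a', b', c'⟩
  fin_cases a <;> fin_cases b <;> fin_cases c <;> fin_cases a' <;> fin_cases b' <;> fin_cases c' <;>
    simp [Htarget, embAB, embAC, embBC, P00, P0, dT, Matrix.diagonal] <;> norm_num [Prod.ext_iff, Fin.ext_iff]

lemma proj2_psiAC : proj2 psiAC = fun p q =>
    (((![![(-2:ℝ), -4], ![-1, 5]] p.1 p.2) * (![![(-2:ℝ), -4], ![-1, 5]] q.1 q.2) / 46 : ℝ) : ℂ) := by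
  funext p q
  simp only [proj2, psiAC, Complex.conj_ofReal, ← Complex.ofReal_mul]
  congr 1
  rw [div_mul_div_comm, Real.mul_self_sqrt (by norm_num)]

lemma proj2_psiBC : proj2 psiBC = fun p q =>
    (((![![(-6:ℝ), -1], ![-4, 0]] p.1 p.2) * (![![(-6:ℝ), -1], ![-4, 0]] q.1 q.2) / 53 : ℝ) : ℂ) := by
  funext p q
  simp only [proj2, psiBC, Complex.conj_ofReal, ← Complex.ofReal_mul]
  congr 1
  rw [div_mul_div_comm, Real.mul_self_sqrt (by norm_num)]

noncomputable def hr : Q3 → Q3 → ℝ := fun p q =>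
  1/6 * ((![![(0:ℝ),6],![-9,-10]] p.1 p.2.1) * (![![(0:ℝ),6],![-9,-10]] q.1 q.2.1) / 217 * (if p.2.2 = q.2.2 then 1 else 0)
   + (![![(-2:ℝ),-4],![-1,5]] p.1 p.2.2) * (![![(-2:ℝ),-4],![-1,5]] q.1 q.2.2) / 46 * (if p.2.1 = q.2.1 then 1 else 0)
   + (![![(-6:ℝ),-1],![-4,0]] p.2.1 p.2.2) * (![![(-6:ℝ),-1],![-4,0]] q.2.1 q.2.2) / 53 * (if p.1 = q.1 then 1 else 0))

lemma Hof_eq : Hof psiAB psiAC psiBC = fun p q => ((hr p q : ℝ) : ℂ) := by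
  funext p q
  simp only [Hof, Matrix.add_apply, Matrix.smul_apply, embAB, embAC, embBC,
    proj2_psiAB, proj2_psiAC, proj2_psiBC, hr, smul_eq_mul]
  split_ifs <;> push_cast <;> ring

lemma traceH : (Hof psiAB psiAC psiBC).trace = 1 := by
  rw [Hof_eq]
  simp only [Matrix.trace, Matrix.diag, Fintype.sum_prod_type, Fin.sum_univ_two, hr]
  norm_num

lemma traceH2 : (Hof psiAB psiAC psiBC ^ 2).trace = (169/644 : ℂ) := by
  rw [pow_two]
  simp only [Matrix.trace, Matrix.diag_apply, Matrix.mul_apply]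
  simp only [Fintype.sum_prod_type, Fin.sum_univ_two, Hof_eq, hr]
  norm_num

lemma traceTpow (k : ℕ) (hk : k ≠ 0) :
    (Htarget ^ k).trace = ((1/2 : ℂ)^k + 3 * (1/6 : ℂ)^k) := by
  rw [Htarget_eq, Matrix.diagonal_pow, Matrix.trace_diagonal]
  simp only [Fintype.sum_prod_type, Fin.sum_univ_two, Pi.pow_apply, dT]
  norm_num [zero_pow hk]
  ring

-- quadratic-form positivity of the embedded projectors
lemma psd_embAB (u : Fin 2 × Fin 2 → ℂ) : (embAB (proj2 u)).PosSemidef := by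
  rw [Matrix.posSemidef_iff_dotProduct_mulVec]
  constructor
  · ext p q
    simp only [Matrix.conjTranspose_apply, embAB, proj2, star_mul', RCLike.star_def,
      Complex.conj_conj, apply_ite, _root_.map_one, _root_.map_zero]
    rw [mul_comm (starRingEnd ℂ (u (q.1, q.2.1)))]
    split_ifs with h1 h2 <;> simp_all [eq_comm]
  · intro x
    have key : dotProduct (star x) (embAB (proj2 u) *ᵥ x) =
        ∑ c : Fin 2, (∑ a : Fin 2, ∑ b : Fin 2, (starRingEnd ℂ) (x (a,b,c)) * u (a,b)) *
          star (∑ a : Fin 2, ∑ b : Fin 2, (starRingEnd ℂ) (x (a,b,c)) * u (a,b)) := by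
      simp only [dotProduct, Matrix.mulVec, embAB, proj2, Fintype.sum_prod_type,
        Fin.sum_univ_two, Pi.star_apply, RCLike.star_def, dotProduct,
        Fin.isValue, map_sum, _root_.map_mul, Complex.conj_conj, star_sum, star_mul',
        mul_ite, mul_one, mul_zero, ite_mul, zero_mul]
      norm_num
      ring
    rw [key]
    exact Finset.sum_nonneg fun c _ => mul_star_self_nonneg _

lemma psd_embAC (u : Fin 2 × Fin 2 → ℂ) : (embAC (proj2 u)).PosSemidef := by
  rw [Matrix.posSemidef_iff_dotProduct_mulVec]
  constructor
  · ext p q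
    simp only [Matrix.conjTranspose_apply, embAC, proj2, star_mul', RCLike.star_def,
      Complex.conj_conj, apply_ite, _root_.map_one, _root_.map_zero]
    rw [mul_comm (starRingEnd ℂ (u (q.1, q.2.2)))]
    split_ifs with h1 h2 <;> simp_all [eq_comm]
  · intro x
    have key : dotProduct (star x) (embAC (proj2 u) *ᵥ x) =
        ∑ b : Fin 2, (∑ a : Fin 2, ∑ c : Fin 2, (starRingEnd ℂ) (x (a,b,c)) * u (a,c)) *
          star (∑ a : Fin 2, ∑ c : Fin 2, (starRingEnd ℂ) (x (a,b,c)) * u (a,c)) := by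
      simp only [dotProduct, Matrix.mulVec, embAC, proj2, Fintype.sum_prod_type,
        Fin.sum_univ_two, Pi.star_apply, RCLike.star_def, dotProduct,
        Fin.isValue, map_sum, _root_.map_mul, Complex.conj_conj, star_sum, star_mul',
        mul_ite, mul_one, mul_zero, ite_mul, zero_mul]
      norm_num
      ring
    rw [key]
    exact Finset.sum_nonneg fun c _ => mul_star_self_nonneg _

lemma psd_embBC (u : Fin 2 × Fin 2 → ℂ) : (embBC (proj2 u)).PosSemidef := by
  rw [Matrix.posSemidef_iff_dotProduct_mulVec]
  constructor
  · ext p q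
    simp only [Matrix.conjTranspose_apply, embBC, proj2, star_mul', RCLike.star_def,
      Complex.conj_conj, apply_ite, _root_.map_one, _root_.map_zero]
    rw [mul_comm (starRingEnd ℂ (u q.2))]
    split_ifs with h1 h2 <;> simp_all [eq_comm]
  · intro x
    have key : dotProduct (star x) (embBC (proj2 u) *ᵥ x) =
        ∑ a : Fin 2, (∑ b : Fin 2, ∑ c : Fin 2, (starRingEnd ℂ) (x (a,b,c)) * u (b,c)) *
          star (∑ b : Fin 2, ∑ c : Fin 2, (starRingEnd ℂ) (x (a,b,c)) * u (b,c)) := by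
      simp only [dotProduct, Matrix.mulVec, embBC, proj2, Fintype.sum_prod_type,
        Fin.sum_univ_two, Pi.star_apply, RCLike.star_def, dotProduct,
        Fin.isValue, map_sum, _root_.map_mul, Complex.conj_conj, star_sum, star_mul',
        mul_ite, mul_one, mul_zero, ite_mul, zero_mul]
      norm_num
      ring
    rw [key]
    exact Finset.sum_nonneg fun c _ => mul_star_self_nonneg _

lemma psd_H (hH : (Hof psiAB psiAC psiBC).IsHermitian) : (Hof psiAB psiAC psiBC).PosSemidef := by
  have hsum := ((psd_embAB psiAB).add (psd_embAC psiAC)).add (psd_embBC psiBC)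
  rw [Matrix.posSemidef_iff_dotProduct_mulVec]
  refine ⟨hH, fun x => ?_⟩
  unfold Hof
  rw [Matrix.smul_mulVec, dotProduct_smul]
  exact smul_nonneg (by norm_num [Complex.le_def]) (hsum.dotProduct_mulVec_nonneg x)

lemma psd_T : Htarget.PosSemidef := by
  rw [Htarget_eq]
  refine Matrix.PosSemidef.diagonal fun p => ?_
  unfold dT
  split_ifs <;> norm_num [Complex.le_def]

lemma trace_pow_eq {n : Type*} [Fintype n] [DecidableEq n] {A : Matrix n n ℂ}
    (hA : A.IsHermitian) (k : ℕ) :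
    (A ^ k).trace = ∑ i, (hA.eigenvalues i : ℂ) ^ k := by
  set U : Matrix n n ℂ := (hA.eigenvectorUnitary : Matrix n n ℂ) with hUdef
  have h1 : U * star U = 1 := (Matrix.mem_unitaryGroup_iff).mp hA.eigenvectorUnitary.2
  have h2 : star U * U = 1 := (Matrix.mem_unitaryGroup_iff').mp hA.eigenvectorUnitary.2
  set D : Matrix n n ℂ := diagonal (RCLike.ofReal ∘ hA.eigenvalues) with hDdef
  have key : A ^ k = U * D ^ k * star U := by
    induction k with
    | zero => simpa using h1.symm
    | succ m ih =>
      have haux : star U * (U * (D * star U)) = D * star U := by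
        rw [← Matrix.mul_assoc, h2, Matrix.one_mul]
      rw [pow_succ, ih, hA.spectral_theorem]
      simp only [Unitary.conjStarAlgAut_apply, ← hUdef, ← hDdef, Matrix.mul_assoc, haux]
      rw [pow_succ]
      simp only [Matrix.mul_assoc]
  rw [key, Matrix.trace_mul_cycle, h2, Matrix.one_mul,
    Matrix.diagonal_pow, Matrix.trace_diagonal]
  simp

lemma sum_pow_T (hT : Htarget.IsHermitian) (k : ℕ) (hk : k ≠ 0) :
    ∑ i, hT.eigenvalues i ^ k = (1/2:ℝ)^k + 3 * (1/6:ℝ)^k := by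
  have h := trace_pow_eq hT k
  rw [traceTpow k hk] at h
  have h2 : ((∑ i, hT.eigenvalues i ^ k : ℝ) : ℂ) = (((1/2:ℝ)^k + 3 * (1/6:ℝ)^k : ℝ) : ℂ) := by
    push_cast
    rw [← h]
  exact_mod_cast h2

lemma eig_T_mem (hT : Htarget.IsHermitian) (i : Q3) :
    hT.eigenvalues i = 0 ∨ hT.eigenvalues i = 1/2 ∨ hT.eigenvalues i = 1/6 := by
  set lam := hT.eigenvalues with hlam
  have p2 := sum_pow_T hT 2 (by norm_num)
  have p3 := sum_pow_T hT 3 (by norm_num)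
  have p4 := sum_pow_T hT 4 (by norm_num)
  have p5 := sum_pow_T hT 5 (by norm_num)
  have p6 := sum_pow_T hT 6 (by norm_num)
  have expand : ∀ x : ℝ, x^2*(x-1/2)^2*(x-1/6)^2
      = x^6 - (4/3)*x^5 + (11/18)*x^4 - (1/9)*x^3 + (1/144)*x^2 := fun x => by ring
  have hgsum : ∑ j, (lam j)^2*(lam j - 1/2)^2*(lam j - 1/6)^2 = 0 := by
    simp only [expand]
    simp only [Finset.sum_add_distrib, Finset.sum_sub_distrib, ← Finset.mul_sum]
    rw [p2, p3, p4, p5, p6]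
    norm_num
  have hzero := (Finset.sum_eq_zero_iff_of_nonneg
    (fun j _ => by positivity)).mp hgsum i (Finset.mem_univ i)
  rcases mul_eq_zero.mp hzero with h | h
  · rcases mul_eq_zero.mp h with h' | h'
    · exact Or.inl (by nlinarith [sq_nonneg (lam i)])
    · exact Or.inr (Or.inl (by nlinarith [sq_nonneg (lam i - 1/2)]))
  · exact Or.inr (Or.inr (by nlinarith [sq_nonneg (lam i - 1/6)]))

lemma entropy_T (hT : Htarget.IsHermitian) :
    vNEntropy hT = 1/2 * Real.logb 2 2 + 3 * (1/6 * Real.logb 2 6) := by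
  set L := Real.logb 2 6 with hL
  set lam := hT.eigenvalues with hlam
  have p1 : ∑ i, lam i = 1 := by
    have h := sum_pow_T hT 1 (by norm_num)
    simp only [pow_one] at h
    rw [hlam, h]; norm_num
  have p2 : ∑ i, lam i ^ 2 = 1/3 := by
    have := sum_pow_T hT 2 (by norm_num)
    rw [this]; norm_num
  have fval : ∀ i, -(lam i * Real.logb 2 (lam i))
      = (-1/2 + 3/2*L) * lam i + (3 - 3*L) * (lam i)^2 := by
    intro i
    rcases eig_T_mem hT i with h | h | h <;> rw [show hT.eigenvalues i = lam i from rfl] at h <;> rw [h]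
    · simp [Real.logb_zero]
    · rw [show Real.logb 2 (1/2 : ℝ) = -1 by
        rw [one_div, Real.logb_inv, Real.logb_self_eq_one (by norm_num)]]
      ring
    · rw [show Real.logb 2 (1/6 : ℝ) = -L by
        rw [one_div, Real.logb_inv]]
      ring
  unfold vNEntropy
  rw [show (∑ i, -(hT.eigenvalues i * Real.logb 2 (hT.eigenvalues i)))
      = ∑ i, ((-1/2 + 3/2*L) * lam i + (3 - 3*L) * (lam i)^2) from Finset.sum_congr rfl fun i _ => fval i]
  rw [Finset.sum_add_distrib, ← Finset.mul_sum, ← Finset.mul_sum, p1, p2,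
    Real.logb_self_eq_one (by norm_num)]
  ring

lemma entropy_H_gt (hH : (Hof psiAB psiAC psiBC).IsHermitian) :
    1/2 * Real.logb 2 2 + 3 * (1/6 * Real.logb 2 6) < vNEntropy hH := by
  set lam := hH.eigenvalues with hlam
  have hnn : ∀ i, 0 ≤ lam i := fun i => (psd_H hH).eigenvalues_nonneg i
  have q1 : ∑ i, lam i = 1 := by
    have h := trace_pow_eq hH 1
    simp only [pow_one, traceH] at h
    have h2 : ((∑ i, lam i : ℝ) : ℂ) = ((1:ℝ) : ℂ) := by
      push_cast
      rw [← h]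
    exact_mod_cast h2
  have q2 : ∑ i, lam i ^ 2 = 169/644 := by
    have h := trace_pow_eq hH 2
    rw [traceH2] at h
    have h2 : ((∑ i, lam i ^ 2 : ℝ) : ℂ) = ((169/644 : ℝ) : ℂ) := by
      push_cast
      rw [← h]
    exact_mod_cast h2
  classical
  set t : Finset Q3 := Finset.univ.filter (fun i => lam i ≠ 0) with ht
  have hq1t : ∑ i ∈ t, lam i = 1 := by
    rw [ht, Finset.sum_filter_of_ne (fun i _ h => h), q1]
  have hq2t : ∑ i ∈ t, lam i ^ 2 = 169/644 := by
    rw [ht, Finset.sum_filter_of_ne (fun i _ h => by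
      intro h0; exact h (by rw [h0, zero_pow]; norm_num)), q2]
  have hlogt : ∑ i ∈ t, lam i * Real.log (lam i) = ∑ i, lam i * Real.log (lam i) := by
    rw [ht]
    exact Finset.sum_filter_of_ne (fun i _ h => by
      intro h0; exact h (by rw [h0, zero_mul]))
  have jensen : ∑ i ∈ t, lam i * Real.log (lam i) ≤ Real.log (169/644) := by
    have hc := (strictConcaveOn_log_Ioi.concaveOn).le_map_sum (t := t) (w := lam) (p := lam)
      (fun i _ => hnn i) hq1t
      (fun i hi => by
        have := (Finset.mem_filter.mp hi).2
        exact lt_of_le_of_ne (hnn i) (Ne.symm this))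
    simp only [smul_eq_mul] at hc
    calc ∑ i ∈ t, lam i * Real.log (lam i) ≤ Real.log (∑ i ∈ t, lam i * lam i) := hc
      _ = Real.log (169/644) := by
          congr 1
          rw [← hq2t]
          exact Finset.sum_congr rfl fun i _ => (sq (lam i)).symm ▸ (pow_two (lam i)).symm
  have hlog2 : (0:ℝ) < Real.log 2 := Real.log_pos (by norm_num)
  have hent : vNEntropy hH = -(∑ i, lam i * Real.log (lam i)) / Real.log 2 := by
    unfold vNEntropy
    have e : ∀ i : Q3, -(lam i * Real.logb 2 (lam i)) = -(lam i * Real.log (lam i)) / Real.log 2 :=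
      fun i => by rw [Real.logb]; ring
    show ∑ i, -(lam i * Real.logb 2 (lam i)) = _
    simp_rw [e]
    rw [← Finset.sum_div, ← Finset.sum_neg_distrib]
  have hbound : -(Real.log (169/644)) / Real.log 2 ≤ vNEntropy hH := by
    rw [hent]
    apply (div_le_div_iff_of_pos_right hlog2).mpr
    rw [← hlogt]
    exact neg_le_neg jensen
  refine lt_of_lt_of_le ?_ hbound
  rw [lt_div_iff₀ hlog2]
  have hlogb2 : Real.logb 2 2 = 1 := Real.logb_self_eq_one (by norm_num)
  have hlogb6 : Real.logb 2 6 = Real.log 6 / Real.log 2 := rfl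
  have hneg : -(Real.log (169/644)) = Real.log (644/169) := by
    rw [← Real.log_inv]
    norm_num
  rw [hlogb2, hlogb6, hneg]
  have key : Real.log 2 + Real.log 6 < 2 * Real.log (644/169) := by
    have h1 : Real.log 2 + Real.log 6 = Real.log 12 := by
      rw [← Real.log_mul (by norm_num) (by norm_num)]
      norm_num
    have h2 : (2:ℝ) * Real.log (644/169) = Real.log ((644/169:ℝ)^2) := by
      rw [Real.log_pow]
      norm_num
    rw [h1, h2]
    exact Real.log_lt_log (by norm_num) (by norm_num)
  have hne : Real.log 2 ≠ 0 := ne_of_gt hlog2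
  have expand2 : (1/2*(1:ℝ) + 3*(1/6*(Real.log 6/Real.log 2))) * Real.log 2
      = 1/2*Real.log 2 + 1/2*Real.log 6 := by
    field_simp
    ring
  rw [expand2]
  linarith [key]

theorem stmt19 (hH : (Hof psiAB psiAC psiBC).IsHermitian) (hT : Htarget.IsHermitian) :
    vNEntropy hT = 1/2 * Real.logb 2 2 + 3 * (1/6 * Real.logb 2 6) ∧
    vNEntropy hT < vNEntropy hH := by
  refine ⟨entropy_T hT, ?_⟩
  rw [entropy_T hT]
  exact entropy_H_gt hH
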